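/- The action of the braid-cyclic operations on trees with N labeled edges is transitive: for any two trees T and T' with N labeled edges there is a finite composition of the operations U_1^{±1}, …, U_{N−1}^{±1}, Λ^{±1} taking (the isomorphism class of) T to (the isomorphism class of) T'. -/

import Mathlib

open scoped Classical

/-! Trees with `N` labeled edges.

A tree with `N` labeled edges (on `N+1` vertices) is modeled as a map
`ℓ : ZMod N → Sym2 V` (for `V = Fin (N+1)`) assigning to each label an edge
(an unordered pair of vertices), which is injective, has no loop edges, and whose
edges form a tree.  Two such trees are identified when there is a label-preserving
graph isomorphism, i.e. a permutation of the vertices carrying one edge-labeling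
to the other. -/

/-- The operation `Λ` on trees with labeled edges: the underlying tree is unchanged
and all edge labels are shifted cyclically by one, `i ↦ (i+1) mod N`
(so the edge labeled `i` of the new tree is the edge labeled `i-1` of the old one). -/
def treeLam {N : ℕ} {V : Type*} (ℓ : ZMod N → Sym2 V) : ZMod N → Sym2 V :=
  fun i => ℓ (i - 1)

/-- The operation `U_k` on trees with labeled edges: if the edges labeled `k-1` and `k`
have no common vertex, the two labels are exchanged; if the edge labeled `k-1` joins
`A` and `B` and the edge labeled `k` joins `A` and `C`, then the edge `AB` receives
label `k`, the edge `AC` is deleted, and a new edge `BC` labeled `k-1` is added. -/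
noncomputable def treeU {N : ℕ} {V : Type*}
    (k : ZMod N) (ℓ : ZMod N → Sym2 V) : ZMod N → Sym2 V :=
  if h : ∃ a, a ∈ ℓ (k - 1) ∧ a ∈ ℓ k then
    -- the common vertex is `A := h.choose`; `B`, `C` are the other endpoints
    fun i =>
      if i = k - 1 then
        Sym2.mk (Sym2.Mem.other h.choose_spec.1) (Sym2.Mem.other h.choose_spec.2)
      else if i = k then ℓ (k - 1)
      else ℓ i
  else
    fun i =>
      if i = k - 1 then ℓ k
      else if i = k then ℓ (k - 1)
      else ℓ i

/-- Two edge-labelings are equivalent iff some label-preserving graph isomorphism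
(a permutation of the vertices) carries one to the other. -/
def treeEquiv {N : ℕ} {V : Type*} (ℓ ℓ' : ZMod N → Sym2 V) : Prop :=
  ∃ σ : Equiv.Perm V, ∀ i, ℓ' i = Sym2.map σ (ℓ i)

/-- `ℓ` is a tree with `N` labeled edges: the `N` assigned edges are distinct non-loops
and form a (connected, acyclic) tree on the `N+1` vertices. -/
def IsLTree {N : ℕ} (ℓ : ZMod N → Sym2 (Fin (N + 1))) : Prop :=
  Function.Injective ℓ ∧ (∀ i, ¬ (ℓ i).IsDiag) ∧
    (SimpleGraph.fromEdgeSet (Set.range ℓ)).IsTree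

/-- One move on trees with labeled edges: apply `Λ` or some `U_k` (`1 ≤ k ≤ N-1`) and
pass to any isomorphic labeled tree. -/
def treeStep (N : ℕ) (a b : ZMod N → Sym2 (Fin (N + 1))) : Prop :=
  treeEquiv (treeLam a) b ∨
    ∃ k : ℕ, 1 ≤ k ∧ k ≤ N - 1 ∧ treeEquiv (treeU (k : ZMod N) a) b

section Lemmas

variable {N : ℕ} {V : Type*}

/-- the master relation -/
def MRel (N : ℕ) (x y : ZMod N → Sym2 (Fin (N + 1))) : Prop :=
  treeStep N x y ∨ treeStep N y x ∨ treeEquiv x y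

theorem treeEquiv_refl (ℓ : ZMod N → Sym2 V) : treeEquiv ℓ ℓ :=
  ⟨Equiv.refl V, fun i => by simp⟩

theorem treeEquiv_symm {ℓ ℓ' : ZMod N → Sym2 V} (h : treeEquiv ℓ ℓ') : treeEquiv ℓ' ℓ := by
  obtain ⟨σ, hσ⟩ := h
  refine ⟨σ.symm, fun i => ?_⟩
  rw [hσ i, Sym2.map_map]
  simp

theorem MRel_symm {x y : ZMod N → Sym2 (Fin (N + 1))} (h : MRel N x y) : MRel N y x := by
  rcases h with h | h | h
  · exact Or.inr (Or.inl h)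
  · exact Or.inl h
  · exact Or.inr (Or.inr (treeEquiv_symm h))

theorem rtg_symm {x y : ZMod N → Sym2 (Fin (N + 1))}
    (h : Relation.ReflTransGen (MRel N) x y) : Relation.ReflTransGen (MRel N) y x := by
  induction h with
  | refl => exact .refl
  | tail _ h2 ih => exact Relation.ReflTransGen.trans (.single (MRel_symm h2)) ih

theorem rel_lam (ℓ : ZMod N → Sym2 (Fin (N + 1))) : MRel N ℓ (treeLam ℓ) :=
  Or.inl (Or.inl (treeEquiv_refl _))

theorem rel_U {k : ℕ} (hk1 : 1 ≤ k) (hk2 : k ≤ N - 1) (ℓ : ZMod N → Sym2 (Fin (N + 1))) :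
    MRel N ℓ (treeU (k : ZMod N) ℓ) :=
  Or.inl (Or.inr ⟨k, hk1, hk2, treeEquiv_refl _⟩)

/-- Φ^[n] formula -/
theorem treeLam_iterate (ℓ : ZMod N → Sym2 V) (n : ℕ) :
    treeLam^[n] ℓ = fun t => ℓ (t - n) := by
  induction n with
  | zero => simp
  | succ n ih =>
      rw [Function.iterate_succ_apply', ih]
      funext t
      simp only [treeLam]
      congr 1
      push_cast
      ring

theorem rtg_lam_iterate (ℓ : ZMod N → Sym2 (Fin (N + 1))) (n : ℕ) :
    Relation.ReflTransGen (MRel N) ℓ (treeLam^[n] ℓ) := by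
  induction n with
  | zero => exact .refl
  | succ n ih =>
      rw [Function.iterate_succ_apply']
      exact ih.tail (rel_lam _)

/-- swap form of treeU -/
theorem treeU_swap {k : ZMod N} {ℓ : ZMod N → Sym2 V}
    (h : ¬ ∃ a, a ∈ ℓ (k - 1) ∧ a ∈ ℓ k) :
    treeU k ℓ = ℓ ∘ (Equiv.swap (k - 1) k) := by
  funext i
  rw [treeU, dif_neg h]
  by_cases h1 : i = k - 1
  · subst h1; simp [Equiv.swap_apply_left]
  by_cases h2 : i = k
  · subst h2; simp [Equiv.swap_apply_right, h1]
  · simp [h1, h2, Equiv.swap_apply_of_ne_of_ne h1 h2]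

/-- choose of a common-point existence statement, when the common point is unique -/
theorem choose_common {α : Type*} {s t : Sym2 α} (h : ∃ a, a ∈ s ∧ a ∈ t) {x : α}
    (uniq : ∀ b, b ∈ s → b ∈ t → b = x) : h.choose = x :=
  uniq _ h.choose_spec.1 h.choose_spec.2

theorem other_eq_of {α : Type*} {a z : α} {s : Sym2 α} (h : a ∈ s) (hs : s = s(a, z))
    (haz : a ≠ z) : Sym2.Mem.other h = z := by
  subst hs
  have hsp := Sym2.other_spec h
  rcases Sym2.eq_iff.1 hsp with ⟨_, h'⟩ | ⟨h', _⟩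
  · exact h'
  · exact absurd h' haz

/-- slide form of treeU -/
theorem treeU_slide {k : ZMod N} {ℓ : ZMod N → Sym2 V} {x y z : V}
    (h1 : ℓ (k - 1) = s(x, z)) (h2 : ℓ k = s(x, y))
    (hxz : x ≠ z) (hxy : x ≠ y) (hyz : y ≠ z) :
    treeU k ℓ = fun i => if i = k - 1 then s(z, y) else if i = k then s(x, z) else ℓ i := by
  have hex : ∃ a, a ∈ ℓ (k - 1) ∧ a ∈ ℓ k := ⟨x, by rw [h1]; simp, by rw [h2]; simp⟩
  have hch : hex.choose = x := by
    refine choose_common hex fun b hb hb' => ?_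
    rw [h1] at hb
    rw [h2] at hb'
    rcases Sym2.mem_iff.1 hb with rfl | rfl
    · rfl
    · rcases Sym2.mem_iff.1 hb' with rfl | h5
      · exact absurd rfl hxz
      · exact absurd h5.symm hyz
  have o1 : Sym2.Mem.other hex.choose_spec.1 = z :=
    other_eq_of _ (by rw [hch]; exact h1) (by rw [hch]; exact hxz)
  have o2 : Sym2.Mem.other hex.choose_spec.2 = y :=
    other_eq_of _ (by rw [hch]; exact h2) (by rw [hch]; exact hxy)
  funext i
  rw [treeU, dif_pos hex]
  by_cases hi1 : i = k - 1
  · subst hi1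
    rw [if_pos rfl, if_pos rfl, o1, o2]
  · by_cases hi2 : i = k
    · subst hi2; simp [hi1, h1]
    · simp [hi1, hi2]

end Lemmas

section Graph
open SimpleGraph

variable {V : Type*} {G G' : SimpleGraph V} {x y z : V}

theorem sdiff_adj_of (hxz : G.Adj x z) (h1 : s(x, z) ≠ s(x, y)) :
    (G \ fromEdgeSet {s(x, y)}).Adj x z := by
  rw [sdiff_adj]
  refine ⟨hxz, fun h => ?_⟩
  rw [fromEdgeSet_adj] at h
  exact h1 (Set.mem_singleton_iff.1 h.1)

theorem no_triangle (hG : G.IsAcyclic) (hxy : G.Adj x y) (hxz : G.Adj x z)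
    (hzy : G.Adj z y) : False := by
  have hb := (isAcyclic_iff_forall_adj_isBridge.mp hG) hxy
  rw [isBridge_iff] at hb
  apply hb
  have a1 : (G \ fromEdgeSet {s(x, y)}).Adj x z := by
    refine sdiff_adj_of hxz fun h => ?_
    rcases Sym2.eq_iff.1 h with ⟨-, h'⟩ | ⟨h', -⟩
    · exact hzy.ne h'
    · exact hxy.ne h'
  have a2 : (G \ fromEdgeSet {s(x, y)}).Adj z y := by
    rw [sdiff_adj]
    refine ⟨hzy, fun h => ?_⟩
    rw [fromEdgeSet_adj] at h
    rcases Sym2.eq_iff.1 (Set.mem_singleton_iff.1 h.1) with ⟨h', -⟩ | ⟨h', -⟩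
    · exact hxz.ne h'.symm
    · exact hzy.ne h'
  exact a1.reachable.trans a2.reachable

theorem conn_pres (h1 : ∀ e ∈ G.edgeSet, e ≠ s(x, y) → e ∈ G'.edgeSet)
    (h2 : G'.Adj x z) (h3 : G'.Adj z y) (hc : G.Connected) : G'.Connected := by
  have hreach : ∀ u v : V, G.Adj u v → G'.Reachable u v := by
    intro u v huv
    by_cases he : s(u, v) = s(x, y)
    · rcases Sym2.eq_iff.1 he with ⟨rfl, rfl⟩ | ⟨rfl, rfl⟩
      · exact h2.reachable.trans h3.reachable
      · exact (h2.reachable.trans h3.reachable).symm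
    · exact (G'.mem_edgeSet.1 (h1 _ (G.mem_edgeSet.2 huv) he)).reachable
  haveI : Nonempty V := hc.nonempty
  refine Connected.mk ?_
  intro u v
  obtain ⟨w⟩ := hc.preconnected u v
  induction w with
  | nil => exact Reachable.refl _
  | cons h p ih => exact (hreach _ _ h).trans ih

theorem acyc_pres (hG : G.IsAcyclic) (hxy : G.Adj x y) (hxz : G.Adj x z) (hyz : y ≠ z)
    (hsub : G'.edgeSet ⊆ insert s(z, y) (G.edgeSet \ {s(x, y)})) : G'.IsAcyclic := by
  intro v c hc
  by_cases he : s(z, y) ∈ c.edges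
  · have hr : (G' \ fromEdgeSet {s(z, y)}).Reachable z y :=
      (adj_and_reachable_delete_edges_iff_exists_cycle.mpr ⟨v, c, hc, he⟩).2
    have hle : (G' \ fromEdgeSet {s(z, y)}) ≤ G \ fromEdgeSet {s(x, y)} := by
      rw [← edgeSet_subset_edgeSet]
      intro e hee
      rw [edgeSet_sdiff] at hee ⊢
      rcases hee with ⟨heG', hne⟩
      rcases Set.mem_insert_iff.1 (hsub heG') with h' | h'
      · exfalso
        apply hne
        subst h'
        rw [edgeSet_fromEdgeSet]
        exact ⟨rfl, by simp [hyz.symm]⟩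
      · refine ⟨h'.1, ?_⟩
        rw [edgeSet_fromEdgeSet]
        rintro ⟨h'', -⟩
        exact h'.2 h''
    have hb := (isAcyclic_iff_forall_adj_isBridge.mp hG) hxy
    rw [isBridge_iff] at hb
    apply hb
    have a1 : (G \ fromEdgeSet {s(x, y)}).Adj x z := by
      refine sdiff_adj_of hxz fun h => ?_
      rcases Sym2.eq_iff.1 h with ⟨-, h'⟩ | ⟨h', -⟩
      · exact hyz h'.symm
      · exact hxy.ne h'
    exact a1.reachable.trans (Reachable.mono hle hr)
  · refine hG (c.transfer G fun e hee => ?_) (hc.transfer _)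
    rcases Set.mem_insert_iff.1 (hsub (c.edges_subset_edgeSet hee)) with h' | h'
    · exact absurd (h' ▸ hee) he
    · exact h'.1

end Graph

section P3
open SimpleGraph
variable {N : ℕ}

noncomputable def mA [NeZero N] (A : Fin (N + 1)) (ℓ : ZMod N → Sym2 (Fin (N + 1))) : ℕ :=
  (Finset.univ.filter (fun t => A ∈ ℓ t)).card

variable [NeZero N] {A : Fin (N + 1)} {ℓ ℓ' : ZMod N → Sym2 (Fin (N + 1))}

theorem mA_congr (h : ∀ t, A ∈ ℓ' t ↔ A ∈ ℓ t) : mA A ℓ' = mA A ℓ := by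
  unfold mA
  congr 1
  exact Finset.filter_congr fun t _ => by rw [h t]

theorem mA_comp_equiv (e : Equiv.Perm (ZMod N)) : mA A (ℓ ∘ e) = mA A ℓ := by
  unfold mA
  exact Finset.card_bij (fun t _ => e t)
    (fun t ht => by simpa using (Finset.mem_filter.1 ht).2)
    (fun a _ b _ h => e.injective h)
    (fun b hb => ⟨e.symm b, by simpa using (Finset.mem_filter.1 hb).2, by simp⟩)

theorem mA_insert {k : ZMod N} (h : ∀ t, A ∈ ℓ' t ↔ (A ∈ ℓ t ∨ t = k)) (hk : A ∉ ℓ k) :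
    mA A ℓ' = mA A ℓ + 1 := by
  unfold mA
  have : (Finset.univ.filter (fun t => A ∈ ℓ' t))
      = insert k (Finset.univ.filter (fun t => A ∈ ℓ t)) := by
    ext t
    simp only [Finset.mem_filter, Finset.mem_insert, Finset.mem_univ, true_and, h t]
    tauto
  rw [this, Finset.card_insert_of_notMem (by simp [hk])]

theorem mA_le : mA A ℓ ≤ N := by
  unfold mA
  calc (Finset.univ.filter (fun t => A ∈ ℓ t)).card ≤ Finset.univ.card :=
        Finset.card_filter_le _ _
    _ = N := by simp [ZMod.card]

theorem forall_mem_of_mA_eq (h : mA A ℓ = N) : ∀ t, A ∈ ℓ t := by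
  have : (Finset.univ.filter (fun t => A ∈ ℓ t)) = Finset.univ := by
    apply Finset.eq_univ_of_card
    unfold mA at h
    rw [h]; simp [ZMod.card]
  intro t
  have := Finset.mem_filter.1 (this ▸ Finset.mem_univ t)
  exact this.2

end P3


section P4
open SimpleGraph
variable {N : ℕ} {ℓ : ZMod N → Sym2 (Fin (N + 1))}

theorem isLTree_comp (hℓ : IsLTree ℓ) (e : Equiv.Perm (ZMod N)) : IsLTree (ℓ ∘ e) := by
  obtain ⟨hinj, hnd, htree⟩ := hℓ
  refine ⟨hinj.comp e.injective, fun i => hnd _, ?_⟩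
  have hr : Set.range (ℓ ∘ ⇑e) = Set.range ℓ := by
    rw [Set.range_comp, Equiv.range_eq_univ, Set.image_univ]
  rwa [hr]

theorem ltree_adj (hℓ : IsLTree ℓ) {t : ZMod N} {u v : Fin (N + 1)} (h : ℓ t = s(u, v)) :
    (fromEdgeSet (Set.range ℓ)).Adj u v := by
  rw [fromEdgeSet_adj]
  refine ⟨⟨t, h⟩, fun huv => hℓ.2.1 t (by rw [h, huv]; exact Sym2.mk_isDiag_iff.2 rfl)⟩

/-- no other edge can close the triangle with `ℓ (k-1) = s(x,z)` and `ℓ k = s(x,y)` -/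
theorem no_edge_zy (hℓ : IsLTree ℓ) {k : ZMod N} {x y z : Fin (N + 1)}
    (h1 : ℓ (k - 1) = s(x, z)) (h2 : ℓ k = s(x, y)) (hyz : y ≠ z) :
    ∀ t, ℓ t ≠ s(z, y) := by
  intro t ht
  exact no_triangle hℓ.2.2.IsAcyclic (ltree_adj hℓ h2) (ltree_adj hℓ h1) (ltree_adj hℓ ht)

theorem isLTree_slide (hℓ : IsLTree ℓ) {k : ZMod N} {x y z : Fin (N + 1)}
    (h1 : ℓ (k - 1) = s(x, z)) (h2 : ℓ k = s(x, y)) (hyz : y ≠ z) :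
    IsLTree (fun i => if i = k - 1 then s(z, y) else if i = k then s(x, z) else ℓ i) := by
  have hzy_not := no_edge_zy hℓ h1 h2 hyz
  obtain ⟨hinj, hnd, htree⟩ := hℓ
  have hxz : x ≠ z := fun h => hnd (k - 1) (by rw [h1, ← h]; exact Sym2.mk_isDiag_iff.2 rfl)
  have hxy : x ≠ y := fun h => hnd k (by rw [h2, ← h]; exact Sym2.mk_isDiag_iff.2 rfl)
  have hk : k - 1 ≠ k := by
    intro h
    have : s(x, z) = s(x, y) := by rw [← h1, h, h2]
    rcases Sym2.eq_iff.1 this with ⟨-, h'⟩ | ⟨h', -⟩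
    · exact hyz h'.symm
    · exact hxy h'
  set ℓ' : ZMod N → Sym2 (Fin (N + 1)) :=
    fun i => if i = k - 1 then s(z, y) else if i = k then s(x, z) else ℓ i with hℓ'
  have val1 : ℓ' (k - 1) = s(z, y) := by simp [hℓ']
  have val2 : ℓ' k = s(x, z) := by simp [hℓ', hk.symm]
  have val3 : ∀ t, t ≠ k - 1 → t ≠ k → ℓ' t = ℓ t := by
    intro t ht1 ht2; simp [hℓ', ht1, ht2]
  have hne1 : s(z, y) ≠ s(x, z) := by
    intro h
    rcases Sym2.eq_iff.1 h with ⟨-, h'⟩ | ⟨-, h'⟩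
    · exact hyz h'
    · exact hxy h'.symm
  have hinj' : Function.Injective ℓ' := by
    intro a b hab
    by_cases ha1 : a = k - 1
    · by_cases hb1 : b = k - 1
      · rw [ha1, hb1]
      rw [ha1, val1] at hab
      by_cases hb2 : b = k
      · rw [hb2, val2] at hab; exact absurd hab hne1
      · rw [val3 b hb1 hb2] at hab; exact absurd hab.symm (hzy_not b)
    by_cases ha2 : a = k
    · rw [ha2, val2] at hab
      by_cases hb1 : b = k - 1
      · rw [hb1, val1] at hab; exact absurd hab.symm hne1
      by_cases hb2 : b = k
      · rw [ha2, hb2]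
      · rw [val3 b hb1 hb2] at hab
        exact absurd ((hinj (h1.trans hab)).symm) hb1
    · rw [val3 a ha1 ha2] at hab
      by_cases hb1 : b = k - 1
      · rw [hb1, val1] at hab; exact absurd hab (hzy_not a)
      by_cases hb2 : b = k
      · rw [hb2, val2, ← h1] at hab; exact absurd (hinj hab) ha1
      · rw [val3 b hb1 hb2] at hab; exact hinj hab
  have hnd' : ∀ i, ¬ (ℓ' i).IsDiag := by
    intro i
    by_cases hi1 : i = k - 1
    · rw [hi1, val1, Sym2.mk_isDiag_iff]; exact fun h => hyz h.symm
    by_cases hi2 : i = k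
    · rw [hi2, val2, Sym2.mk_isDiag_iff]; exact hxz
    · rw [val3 i hi1 hi2]; exact hnd i
  have hadjxz : (fromEdgeSet (Set.range ℓ')).Adj x z :=
    (fromEdgeSet_adj _).2 ⟨⟨k, val2⟩, hxz⟩
  have hadjzy : (fromEdgeSet (Set.range ℓ')).Adj z y :=
    (fromEdgeSet_adj _).2 ⟨⟨k - 1, val1⟩, fun h => hyz h.symm⟩
  have hconn : (fromEdgeSet (Set.range ℓ')).Connected := by
    refine conn_pres (fun e he hexy => ?_) hadjxz hadjzy htree.isConnected
    rw [edgeSet_fromEdgeSet] at he ⊢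
    obtain ⟨⟨t, ht⟩, hd⟩ := he
    refine ⟨?_, hd⟩
    by_cases ht1 : t = k - 1
    · exact ⟨k, by rw [val2, ← h1, ← ht1, ht]⟩
    by_cases ht2 : t = k
    · exact absurd (by rw [← ht, ht2, h2]) hexy
    · exact ⟨t, by rw [val3 t ht1 ht2, ht]⟩
  have hacyc : (fromEdgeSet (Set.range ℓ')).IsAcyclic := by
    refine acyc_pres htree.IsAcyclic (ltree_adj ⟨hinj, hnd, htree⟩ h2)
      (ltree_adj ⟨hinj, hnd, htree⟩ h1) hyz ?_
    intro e he
    rw [edgeSet_fromEdgeSet] at he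
    obtain ⟨⟨t, ht⟩, hd⟩ := he
    by_cases ht1 : t = k - 1
    · rw [ht1, val1] at ht
      exact Set.mem_insert_iff.2 (Or.inl ht.symm)
    refine Set.mem_insert_iff.2 (Or.inr ?_)
    rw [edgeSet_fromEdgeSet]
    by_cases ht2 : t = k
    · rw [ht2, val2] at ht
      refine ⟨⟨⟨k - 1, by rw [h1, ht]⟩, ht ▸ hd⟩, ?_⟩
      rw [← ht]
      intro h
      rcases Sym2.eq_iff.1 h with ⟨-, h'⟩ | ⟨h', -⟩
      · exact hyz h'.symm
      · exact hxy h'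
    · rw [val3 t ht1 ht2] at ht
      refine ⟨⟨⟨t, ht⟩, ht ▸ hd⟩, ?_⟩
      rw [← ht, ← h2]
      intro h
      exact ht2 (hinj h)
  exact ⟨hinj', hnd', hconn, hacyc⟩

end P4

section P5
open SimpleGraph

theorem cast_ne_zero' {N : ℕ} [NeZero N] {d : ℕ} (h1 : 1 ≤ d) (h2 : d < N) :
    (d : ZMod N) ≠ 0 := by
  intro h
  have hdvd := (ZMod.natCast_eq_zero_iff d N).1 h
  have := Nat.le_of_dvd (by omega) hdvd
  omega

theorem cast_sub_one {N : ℕ} {d : ℕ} (h1 : 1 ≤ d) :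
    ((d : ℕ) : ZMod N) - 1 = ((d - 1 : ℕ) : ZMod N) := by
  have : d = (d - 1) + 1 := by omega
  rw [this]
  push_cast
  ring

theorem sym2_rep {α : Type*} (z : Sym2 α) : ∃ x y, z = s(x, y) :=
  Sym2.ind (fun x y => ⟨x, y, rfl⟩) z

theorem lemD {N : ℕ} [NeZero N] (A : Fin (N + 1)) :
    ∀ d : ℕ, 1 ≤ d → d ≤ N - 1 →
    ∀ ℓ : ZMod N → Sym2 (Fin (N + 1)), IsLTree ℓ →
    ∀ B C : Fin (N + 1), ℓ 0 = s(A, B) → ℓ ((d : ℕ) : ZMod N) = s(B, C) → A ≠ C →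
    ∃ ℓ', Relation.ReflTransGen (MRel N) ℓ ℓ' ∧ IsLTree ℓ' ∧ mA A ℓ' = mA A ℓ + 1 := by
  intro d
  induction d using Nat.strong_induction_on with
  | _ d IH =>
  intro hd1 hdN ℓ hℓ B C h0 hd hAC
  have hN1 : 1 ≤ N := Nat.one_le_iff_ne_zero.2 (NeZero.ne N)
  have hN2 : 2 ≤ N := by omega
  have hdlt : d < N := by omega
  have hAB : A ≠ B := fun h => hℓ.2.1 0 (by rw [h0, ← h]; exact Sym2.mk_isDiag_iff.2 rfl)
  have hBC : B ≠ C := fun h => hℓ.2.1 _ (by rw [hd, ← h]; exact Sym2.mk_isDiag_iff.2 rfl)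
  have hc0 : ((d : ℕ) : ZMod N) ≠ 0 := cast_ne_zero' hd1 hdlt
  by_cases hdd : d = 1
  · -- base case : slide ℓ d over ℓ 0 onto A
    subst hdd
    have e1 : ((1 : ℕ) : ZMod N) - 1 = 0 := by push_cast; ring
    have h1' : ℓ (((1 : ℕ) : ZMod N) - 1) = s(B, A) := by rw [e1, h0, Sym2.eq_swap]
    have h2' : ℓ ((1 : ℕ) : ZMod N) = s(B, C) := hd
    have hslide := treeU_slide h1' h2' hAB.symm hBC (Ne.symm hAC)
    refine ⟨treeU ((1 : ℕ) : ZMod N) ℓ, .single (rel_U le_rfl hdN ℓ), ?_, ?_⟩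
    · rw [hslide]
      exact isLTree_slide hℓ h1' h2' (Ne.symm hAC)
    · rw [hslide]
      refine mA_insert (k := ((1 : ℕ) : ZMod N)) (fun t => ?_) ?_
      · by_cases ht0 : t = ((1 : ℕ) : ZMod N) - 1
        · subst ht0
          rw [if_pos rfl, e1, h0]
          simp [Sym2.mem_iff, e1, hc0]
        · by_cases ht1 : t = ((1 : ℕ) : ZMod N)
          · subst ht1
            rw [if_neg ht0, if_pos rfl, hd]
            simp [Sym2.mem_iff]
          · rw [if_neg ht0, if_neg ht1]
            exact (or_iff_left ht1).symm
      · rw [hd]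
        simp [Sym2.mem_iff, hAB, hAC]
  · -- inductive step
    have hd2 : 2 ≤ d := by omega
    have hjm : ((d : ℕ) : ZMod N) - 1 = ((d - 1 : ℕ) : ZMod N) := cast_sub_one hd1
    have hjm0 : ((d - 1 : ℕ) : ZMod N) ≠ 0 := cast_ne_zero' (by omega) (by omega)
    have hjmj : ((d - 1 : ℕ) : ZMod N) ≠ ((d : ℕ) : ZMod N) := by
      intro h
      apply cast_ne_zero' (le_refl 1) (by omega : 1 < N)
      have : ((d : ℕ) : ZMod N) - ((d - 1 : ℕ) : ZMod N) = ((1 : ℕ) : ZMod N) := by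
        rw [← hjm]; push_cast; ring
      rw [← this, h]
      ring
    by_cases hBY : B ∈ ℓ ((d - 1 : ℕ) : ZMod N)
    · -- case (a) : the edge labelled d-1 already touches B
      set E := Sym2.Mem.other hBY with hE
      have hYE : ℓ ((d - 1 : ℕ) : ZMod N) = s(B, E) := (Sym2.other_spec hBY).symm
      have hEA : A ≠ E := by
        intro h
        apply hjm0
        apply hℓ.1
        rw [hYE, h0, ← h, Sym2.eq_swap]
      exact IH (d - 1) (by omega) (by omega) (by omega) ℓ hℓ B E h0 hYE hEA
    · by_cases hCY : C ∈ ℓ ((d - 1 : ℕ) : ZMod N)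
      · -- case (b) : slide the edge labelled d over the edge labelled d-1
        set D := Sym2.Mem.other hCY with hD
        have hYD : ℓ ((d - 1 : ℕ) : ZMod N) = s(C, D) := (Sym2.other_spec hCY).symm
        have hDmem : D ∈ ℓ ((d - 1 : ℕ) : ZMod N) := by rw [hYD]; simp
        have hDB : D ≠ B := fun h => hBY (h ▸ hDmem)
        have hDC : D ≠ C := by
          intro h
          exact hℓ.2.1 _ (by rw [hYD, h]; exact Sym2.mk_isDiag_iff.2 rfl)
        have hDA : D ≠ A := by
          intro h
          refine no_triangle hℓ.2.2.IsAcyclic (y := A) (x := B) (z := C)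
            ((ltree_adj hℓ h0).symm) (ltree_adj hℓ hd) (ltree_adj hℓ (by rw [hYD, h, Sym2.eq_swap]))
        have h1' : ℓ (((d : ℕ) : ZMod N) - 1) = s(C, D) := by rw [hjm]; exact hYD
        have h2' : ℓ ((d : ℕ) : ZMod N) = s(C, B) := by rw [hd, Sym2.eq_swap]
        have hslide := treeU_slide h1' h2' (Ne.symm hDC) (Ne.symm hBC) hDB.symm
        set ℓ₂ : ZMod N → Sym2 (Fin (N + 1)) := fun i =>
          if i = ((d : ℕ) : ZMod N) - 1 then s(D, B)
          else if i = ((d : ℕ) : ZMod N) then s(C, D) else ℓ i with hℓ₂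
        have hT2 : IsLTree ℓ₂ := isLTree_slide hℓ h1' h2' hDB.symm
        have hne_dm : (0 : ZMod N) ≠ ((d : ℕ) : ZMod N) - 1 := by
          rw [hjm]; exact Ne.symm hjm0
        have hne_dd : ((d : ℕ) : ZMod N) ≠ ((d : ℕ) : ZMod N) - 1 := by
          rw [hjm]; exact fun h => hjmj h.symm
        have hv3 : ∀ t, t ≠ ((d : ℕ) : ZMod N) - 1 → t ≠ ((d : ℕ) : ZMod N) → ℓ₂ t = ℓ t := by
          intro t h1 h2
          simp only [hℓ₂]
          rw [if_neg h1, if_neg h2]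
        have hv1 : ℓ₂ (((d : ℕ) : ZMod N) - 1) = s(D, B) := by
          simp only [hℓ₂]
          simp
        have hv2 : ℓ₂ ((d : ℕ) : ZMod N) = s(C, D) := by
          simp only [hℓ₂]
          rw [if_neg hne_dd]
          simp
        have hv0 : ℓ₂ 0 = s(A, B) := by
          rw [hv3 0 hne_dm (Ne.symm hc0)]; exact h0
        have hvd : ℓ₂ ((d - 1 : ℕ) : ZMod N) = s(B, D) := by
          rw [← hjm, hv1]; exact Sym2.eq_swap
        have hm2 : mA A ℓ₂ = mA A ℓ := by
          refine mA_congr fun t => ?_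
          by_cases ht1 : t = ((d : ℕ) : ZMod N) - 1
          · subst ht1
            rw [hv1, hjm, hYD]
            simp [Sym2.mem_iff, hAB, hDA.symm, hAC]
          · by_cases ht2 : t = ((d : ℕ) : ZMod N)
            · subst ht2
              rw [hv2, hd]
              simp [Sym2.mem_iff, hAB, hDA.symm, hAC]
            · rw [hv3 t ht1 ht2]
        obtain ⟨ℓ', hc', hT', hm'⟩ :=
          IH (d - 1) (by omega) (by omega) (by omega) ℓ₂ hT2 B D hv0 hvd (Ne.symm hDA)
        refine ⟨ℓ', ?_, hT', by rw [hm', hm2]⟩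
        refine Relation.ReflTransGen.trans (.single ?_) hc'
        have := rel_U (k := d) hd1 hdN ℓ
        rwa [hslide] at this
      · -- case (c) : the labels d-1 and d sit on disjoint edges : swap them
        have hno : ¬∃ a, a ∈ ℓ (((d : ℕ) : ZMod N) - 1) ∧ a ∈ ℓ ((d : ℕ) : ZMod N) := by
          rintro ⟨a, ha1, ha2⟩
          rw [hd] at ha2
          rw [hjm] at ha1
          rcases Sym2.mem_iff.1 ha2 with rfl | rfl
          · exact hBY ha1
          · exact hCY ha1
        have hswap := treeU_swap hno
        set e : Equiv.Perm (ZMod N) := Equiv.swap (((d : ℕ) : ZMod N) - 1) ((d : ℕ) : ZMod N)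
        have hT2 : IsLTree (ℓ ∘ e) := isLTree_comp hℓ e
        have hv0 : (ℓ ∘ e) 0 = s(A, B) := by
          have : e 0 = 0 := by
            refine Equiv.swap_apply_of_ne_of_ne ?_ (Ne.symm hc0)
            rw [hjm]; exact Ne.symm hjm0
          simp only [Function.comp_apply, this, h0]
        have hvd : (ℓ ∘ e) ((d - 1 : ℕ) : ZMod N) = s(B, C) := by
          have : e ((d - 1 : ℕ) : ZMod N) = ((d : ℕ) : ZMod N) := by
            rw [← hjm]; exact Equiv.swap_apply_left _ _
          simp only [Function.comp_apply, this, hd]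
        obtain ⟨ℓ', hc', hT', hm'⟩ :=
          IH (d - 1) (by omega) (by omega) (by omega) (ℓ ∘ e) hT2 B C hv0 hvd hAC
        refine ⟨ℓ', ?_, hT', by rw [hm', mA_comp_equiv]⟩
        refine Relation.ReflTransGen.trans (.single ?_) hc'
        have := rel_U (k := d) hd1 hdN ℓ
        rwa [hswap] at this

end P5

section P6
open SimpleGraph

theorem lemM {N : ℕ} [NeZero N] (A : Fin (N + 1)) :
    ∀ n : ℕ, ∀ ℓ : ZMod N → Sym2 (Fin (N + 1)), IsLTree ℓ → N ≤ mA A ℓ + n →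
    ∃ ℓ', Relation.ReflTransGen (MRel N) ℓ ℓ' ∧ IsLTree ℓ' ∧ mA A ℓ' = N := by
  intro n
  induction n with
  | zero =>
      intro ℓ hℓ hn
      exact ⟨ℓ, .refl, hℓ, le_antisymm mA_le (by omega)⟩
  | succ n ihn =>
      intro ℓ hℓ hn
      by_cases hm : mA A ℓ = N
      · exact ⟨ℓ, .refl, hℓ, hm⟩
      have hlt : mA A ℓ < N := lt_of_le_of_ne mA_le hm
      -- there is an edge avoiding A
      have hex : ∃ t, A ∉ ℓ t := by
        by_contra h
        push_neg at h
        apply hm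
        apply le_antisymm mA_le
        unfold mA
        have : Finset.univ.filter (fun t => A ∈ ℓ t) = Finset.univ :=
          Finset.filter_true_of_mem fun t _ => h t
        rw [this]
        simp [ZMod.card]
      -- key claim: some edge at distance one from A
      set G := fromEdgeSet (Set.range ℓ) with hG
      have hconn := hℓ.2.2.isConnected
      have hT : ∃ B C : Fin (N + 1), G.Adj A B ∧ G.Adj B C ∧ A ≠ C := by
        by_contra hT
        push_neg at hT
        have key : ∀ (u v : Fin (N + 1)) (w : G.Walk u v),
            (u = A ∨ G.Adj A u) → (v = A ∨ G.Adj A v) := by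
          intro u v w
          induction w with
          | nil => exact id
          | @cons u' m v' h p ih =>
              intro hu
              apply ih
              rcases hu with rfl | hu
              · exact Or.inr h
              · exact Or.inl (hT u' m hu h).symm
        obtain ⟨t, ht⟩ := hex
        obtain ⟨P, Q, hPQ⟩ := sym2_rep (ℓ t)
        rw [hPQ] at ht
        have hAP : A ≠ P := fun h => ht (by rw [← h]; simp)
        have hAQ : A ≠ Q := fun h => ht (by rw [← h]; simp)
        have hadjPQ : G.Adj P Q := ltree_adj hℓ hPQ
        obtain ⟨w⟩ := hconn.preconnected A P
        rcases key A P w (Or.inl rfl) with h | h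
        · exact hAP h.symm
        · exact hAQ (hT P Q h hadjPQ)
      obtain ⟨B, C, hAB, hBC, hAC⟩ := hT
      obtain ⟨i, hi⟩ : s(A, B) ∈ Set.range ℓ := ((fromEdgeSet_adj _).1 hAB).1
      obtain ⟨j, hj⟩ : s(B, C) ∈ Set.range ℓ := ((fromEdgeSet_adj _).1 hBC).1
      -- shift the labels so that the edge AB gets label 0
      set sh : ℕ := (-i).val with hsh
      have hcv : ((sh : ℕ) : ZMod N) = -i := ZMod.natCast_rightInverse (-i)
      set ℓ₁ : ZMod N → Sym2 (Fin (N + 1)) := treeLam^[sh] ℓ with hℓ₁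
      have hform : ℓ₁ = fun t => ℓ (t - ((sh : ℕ) : ZMod N)) := treeLam_iterate ℓ sh
      have hcomp : ℓ₁ = ℓ ∘ ⇑(Equiv.subRight (((sh : ℕ) : ZMod N))) := by
        rw [hform]; rfl
      have hT1 : IsLTree ℓ₁ := by rw [hcomp]; exact isLTree_comp hℓ _
      have hm1 : mA A ℓ₁ = mA A ℓ := by rw [hcomp]; exact mA_comp_equiv _
      have hv0 : ℓ₁ 0 = s(A, B) := by
        rw [hform, hcv]
        simpa using hi
      set d : ℕ := (j - i).val with hd
      have hji : j ≠ i := by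
        intro h
        have : s(A, B) = s(B, C) := by rw [← hi, ← h, hj]
        rcases Sym2.eq_iff.1 this with ⟨h', -⟩ | ⟨h', -⟩
        · exact hAB.ne h'
        · exact hAC h'
      have hd1 : 1 ≤ d := by
        rw [hd, Nat.one_le_iff_ne_zero]
        intro h
        exact hji (by rwa [ZMod.val_eq_zero, sub_eq_zero] at h)
      have hdN : d ≤ N - 1 := by
        have := ZMod.val_lt (j - i)
        omega
      have hvd : ℓ₁ ((d : ℕ) : ZMod N) = s(B, C) := by
        have hsimp : j - i - -i = j := by ring
        rw [hform, hcv, hd, ZMod.natCast_rightInverse (j - i)]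
        show ℓ (j - i - -i) = s(B, C)
        rw [hsimp, hj]
      obtain ⟨ℓ₂, hc2, hT2, hm2⟩ := lemD A d hd1 hdN ℓ₁ hT1 B C hv0 hvd hAC
      obtain ⟨ℓ₃, hc3, hT3, hm3⟩ := ihn ℓ₂ hT2 (by omega)
      exact ⟨ℓ₃, ((rtg_lam_iterate ℓ sh).trans hc2).trans hc3, hT3, hm3⟩

theorem star_equiv {N : ℕ} [NeZero N] (A : Fin (N + 1))
    (ℓa ℓb : ZMod N → Sym2 (Fin (N + 1))) (ha : IsLTree ℓa) (hb : IsLTree ℓb)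
    (hsa : ∀ t, A ∈ ℓa t) (hsb : ∀ t, A ∈ ℓb t) : treeEquiv ℓa ℓb := by
  have hcard : Fintype.card {x : Fin (N + 1) // x ≠ A} = N := by
    have h1 := Fintype.card_subtype_compl (fun x : Fin (N + 1) => x = A)
    rw [Fintype.card_subtype_eq, Fintype.card_fin] at h1
    simpa using h1
  have mk : ∀ (ℓ : ZMod N → Sym2 (Fin (N + 1))), IsLTree ℓ → (∀ t, A ∈ ℓ t) →
      ∃ F : ZMod N → {x : Fin (N + 1) // x ≠ A}, Function.Injective F ∧
        ∀ t, ℓ t = s(A, (F t).1) := by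
    intro ℓ hℓ hs
    refine ⟨fun t => ⟨Sym2.Mem.other (hs t), ?_⟩, ?_, fun t => (Sym2.other_spec (hs t)).symm⟩
    · intro h
      exact hℓ.2.1 t (by rw [← Sym2.other_spec (hs t), h]; exact Sym2.mk_isDiag_iff.2 rfl)
    · intro t t' htt
      apply hℓ.1
      rw [← Sym2.other_spec (hs t), ← Sym2.other_spec (hs t')]
      rw [Subtype.mk.injEq] at htt
      rw [htt]
  obtain ⟨Fa, hFa_inj, hFa⟩ := mk ℓa ha hsa
  obtain ⟨Fb, hFb_inj, hFb⟩ := mk ℓb hb hsb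
  have hbija : Function.Bijective Fa :=
    (Fintype.bijective_iff_injective_and_card Fa).2 ⟨hFa_inj, by rw [hcard, ZMod.card]⟩
  have hbijb : Function.Bijective Fb :=
    (Fintype.bijective_iff_injective_and_card Fb).2 ⟨hFb_inj, by rw [hcard, ZMod.card]⟩
  set Ea := Equiv.ofBijective Fa hbija with hEa
  set Eb := Equiv.ofBijective Fb hbijb with hEb
  set π : Equiv.Perm {x : Fin (N + 1) // x ≠ A} := Ea.symm.trans Eb with hπ
  set σ : Equiv.Perm (Fin (N + 1)) :=
    Equiv.Perm.subtypeCongr π (Equiv.refl {x : Fin (N + 1) // ¬ x ≠ A}) with hσ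
  have hσA : σ A = A := by
    rw [hσ]
    rw [Equiv.Perm.subtypeCongr.apply]
    simp
  have hσF : ∀ t, σ (Fa t).1 = (Fb t).1 := by
    intro t
    rw [hσ, Equiv.Perm.subtypeCongr.apply]
    have hp : ((Fa t).1 ≠ A) := (Fa t).2
    simp only [dif_pos hp]
    have : (⟨(Fa t).1, hp⟩ : {x : Fin (N + 1) // x ≠ A}) = Fa t := rfl
    rw [this, hπ]
    have hEat : Ea.symm (Fa t) = t := by
      apply Ea.injective
      simp [hEa]
    simp [hEat, hEb]
  refine ⟨σ, fun t => ?_⟩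
  rw [hFa t, hFb t, Sym2.map_pair_eq, hσA, hσF t]

end P6

/-- the action of the braid-cyclic operations on trees with `N` labeled edges
is transitive: any two trees with `N` labeled edges are connected by a finite composition
of the operations `U_1^{±1}, …, U_{N-1}^{±1}, Λ^{±1}` (taking isomorphism classes to
isomorphism classes). -/
theorem stmt_5 (N : ℕ) (hN : 1 ≤ N) (a b : ZMod N → Sym2 (Fin (N + 1)))
    (ha : IsLTree a) (hb : IsLTree b) :
    Relation.ReflTransGen
      (fun x y => treeStep N x y ∨ treeStep N y x ∨ treeEquiv x y) a b := by
  haveI : NeZero N := ⟨by omega⟩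
  show Relation.ReflTransGen (MRel N) a b
  set A : Fin (N + 1) := ⟨0, by omega⟩ with hAdef
  obtain ⟨ℓa, hca, hTa, hma⟩ := lemM A N a ha (by omega)
  obtain ⟨ℓb, hcb, hTb, hmb⟩ := lemM A N b hb (by omega)
  have hequiv : treeEquiv ℓa ℓb :=
    star_equiv A ℓa ℓb hTa hTb (forall_mem_of_mA_eq hma) (forall_mem_of_mA_eq hmb)
  exact (hca.tail (Or.inr (Or.inr hequiv))).trans (rtg_symm hcb)
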